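/- Every extreme point of the polytope of doubly stochastic n×n matrices is a permutation matrix (Birkhoff–von Neumann theorem). -/
import Mathlib

/-- Birkhoff–von Neumann: every extreme point of the polytope of doubly stochastic
`n × n` matrices is a permutation matrix. -/
theorem birkhoff_von_neumann_extreme_points (n : ℕ) (M : Matrix (Fin n) (Fin n) ℝ)
    (hM : M ∈ Set.extremePoints ℝ
      {A : Matrix (Fin n) (Fin n) ℝ |
        (∀ i j, 0 ≤ A i j) ∧ (∀ i, ∑ j, A i j = 1) ∧ (∀ j, ∑ i, A i j = 1)}) :
    ∃ σ : Equiv.Perm (Fin n), M = σ.permMatrix ℝ := by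
  have hset : {A : Matrix (Fin n) (Fin n) ℝ |
        (∀ i j, 0 ≤ A i j) ∧ (∀ i, ∑ j, A i j = 1) ∧ (∀ j, ∑ i, A i j = 1)}
      = ↑(doublyStochastic ℝ (Fin n)) := by
    ext A
    simp [mem_doublyStochastic_iff_sum]
  rw [hset] at hM
  rw [doublyStochastic_eq_convexHull_permMatrix] at hM
  obtain ⟨σ, hσ⟩ := extremePoints_convexHull_subset hM
  exact ⟨σ, hσ.symm⟩
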